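/- (Example 2, Case 2.) Let α > 0, β > 1, 0 < σ < 1 and γ > 0, and define G(s) = ∫₀^1 t^{α−1}(1−t)^{β−1}(1−σt)^{−γ} e^{−st} dt for s > 0. Then G is twice differentiable with G(s) > 0 and G′(s) < 0 on (0,∞), and for every s > 0: s · ( G′(s)/G(s) − 2·G″(s)/G′(s) ) ≤ α + 2 + 2γσ/(1−σ). In particular, if α + 2 + 2γσ/(1−σ) ≤ k then G′(s)/G(s) − 2G″(s)/G′(s) ≤ k/s for all s > 0. -/

import Mathlib

open Real MeasureTheory
open Set


noncomputable def Jint (σ p q r s : ℝ) : ℝ :=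
  ∫ t in Set.Ioo (0:ℝ) 1, t ^ p * (1 - t) ^ q * (1 - σ * t) ^ (-r) * Real.exp (-s * t)

lemma beta_integrable {p q : ℝ} (hp : -1 < p) (hq : -1 < q) :
    IntegrableOn (fun t => t ^ p * (1 - t) ^ q) (Ioo (0:ℝ) 1) := by
  have half : ∀ (a b : ℝ), -1 < a →
      IntervalIntegrable (fun t => t ^ a * (1 - t) ^ b) volume 0 (1/2) := by
    intro a b ha
    apply (intervalIntegral.intervalIntegrable_rpow' ha).mul_continuousOn
    apply ContinuousOn.rpow_const
    · exact (continuous_const.sub continuous_id).continuousOn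
    · intro x hx
      rw [uIcc_of_le (by norm_num : (0:ℝ) ≤ 1/2)] at hx
      left
      have h2 := hx.2
      intro h
      rw [show (1:ℝ) - x = 0 ↔ x = 1 from by constructor <;> intro <;> linarith] at h
      nlinarith
  have h1 : IntervalIntegrable (fun t => t ^ p * (1 - t) ^ q) volume 0 (1/2) := half p q hp
  have h2' : IntervalIntegrable (fun t => t ^ q * (1 - t) ^ p) volume 0 (1/2) := half q p hq
  have h2 := h2'.comp_sub_left 1
  norm_num at h2
  have h2'' : IntervalIntegrable (fun t => t ^ p * (1 - t) ^ q) volume (1/2) 1 := by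
    rw [show (fun t : ℝ => t ^ p * (1 - t) ^ q) = (fun x : ℝ => (1 - x) ^ q * x ^ p) from
      funext fun x => mul_comm _ _]
    exact h2.symm
  have := h1.trans h2''
  rw [intervalIntegrable_iff_integrableOn_Ioo_of_le (by norm_num : (0:ℝ) ≤ 1)] at this
  exact this

lemma contOn_J (σ p q r s : ℝ) (hσ0 : 0 < σ) (hσ1 : σ < 1) :
    ContinuousOn (fun t : ℝ => t ^ p * (1 - t) ^ q * (1 - σ * t) ^ (-r) * Real.exp (-s * t))
      (Ioo (0:ℝ) 1) := by
  apply continuousOn_of_forall_continuousAt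
  intro x hx
  have h1 : ContinuousAt (fun t : ℝ => t ^ p) x :=
    continuousAt_id.rpow_const (Or.inl (ne_of_gt hx.1))
  have h2 : ContinuousAt (fun t : ℝ => (1 - t) ^ q) x :=
    (continuousAt_const.sub continuousAt_id).rpow_const
      (Or.inl (by intro h; simp only [Pi.sub_apply, Pi.mul_apply, id_eq] at h; have := hx.2; linarith))
  have h3 : ContinuousAt (fun t : ℝ => (1 - σ * t) ^ (-r)) x :=
    (continuousAt_const.sub (continuousAt_const.mul continuousAt_id)).rpow_const
      (Or.inl (by intro h; simp only [Pi.sub_apply, Pi.mul_apply, id_eq] at h; nlinarith [hx.1, hx.2]))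
  have h4 : ContinuousAt (fun t : ℝ => Real.exp (-s * t)) x :=
    Real.continuous_exp.continuousAt.comp (continuousAt_const.mul continuousAt_id)
  exact ((h1.mul h2).mul h3).mul h4

lemma integrable_J (σ p q r s : ℝ) (hσ0 : 0 < σ) (hσ1 : σ < 1) (hp : -1 < p) (hq : -1 < q)
    (hr : 0 ≤ r) :
    IntegrableOn (fun t : ℝ => t ^ p * (1 - t) ^ q * (1 - σ * t) ^ (-r) * Real.exp (-s * t))
      (Ioo (0:ℝ) 1) := by
  have hmeas : AEStronglyMeasurable
      (fun t : ℝ => t ^ p * (1 - t) ^ q * (1 - σ * t) ^ (-r) * Real.exp (-s * t))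
      (volume.restrict (Ioo (0:ℝ) 1)) :=
    (contOn_J σ p q r s hσ0 hσ1).aestronglyMeasurable measurableSet_Ioo
  have hbd : Integrable (fun t : ℝ => ((1 - σ) ^ (-r) * Real.exp |s|) * (t ^ p * (1 - t) ^ q))
      (volume.restrict (Ioo (0:ℝ) 1)) := (beta_integrable hp hq).const_mul _
  refine hbd.mono' hmeas ?_
  filter_upwards [ae_restrict_mem measurableSet_Ioo] with t ht
  have ht0 := ht.1
  have ht1 := ht.2
  have e1 : (0:ℝ) ≤ t ^ p * (1 - t) ^ q :=
    mul_nonneg (Real.rpow_nonneg ht0.le _) (Real.rpow_nonneg (by linarith) _)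
  have e2 : (1 - σ * t) ^ (-r) ≤ (1 - σ) ^ (-r) :=
    Real.rpow_le_rpow_of_nonpos (by linarith) (by nlinarith) (by linarith)
  have e3 : Real.exp (-s * t) ≤ Real.exp |s| := by
    apply Real.exp_le_exp.2
    calc -s * t ≤ |(-s) * t| := le_abs_self _
    _ = |s| * |t| := by rw [abs_mul, abs_neg]
    _ ≤ |s| * 1 := by
        apply mul_le_mul_of_nonneg_left _ (abs_nonneg s)
        rw [abs_of_pos ht0]; exact ht1.le
    _ = |s| := mul_one _
  have e4 : (0:ℝ) ≤ (1 - σ * t) ^ (-r) := Real.rpow_nonneg (by nlinarith) _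
  rw [Real.norm_eq_abs, abs_of_nonneg (mul_nonneg (mul_nonneg e1 e4) (Real.exp_pos _).le)]
  calc t ^ p * (1 - t) ^ q * (1 - σ * t) ^ (-r) * Real.exp (-s * t)
      ≤ t ^ p * (1 - t) ^ q * ((1 - σ) ^ (-r)) * Real.exp |s| := by
        exact mul_le_mul (mul_le_mul_of_nonneg_left e2 e1) e3 (Real.exp_pos _).le
          (mul_nonneg e1 (Real.rpow_nonneg (by linarith) _))
    _ = (1 - σ) ^ (-r) * Real.exp |s| * (t ^ p * (1 - t) ^ q) := by ring

lemma pos_J (σ p q r s : ℝ) (hσ0 : 0 < σ) (hσ1 : σ < 1) (hp : -1 < p) (hq : -1 < q)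
    (hr : 0 ≤ r) : 0 < Jint σ p q r s := by
  rw [Jint]
  rw [setIntegral_pos_iff_support_of_nonneg_ae]
  · have hsub : Ioo (0:ℝ) 1 ⊆ Function.support
        (fun t : ℝ => t ^ p * (1 - t) ^ q * (1 - σ * t) ^ (-r) * Real.exp (-s * t)) ∩
        Ioo (0:ℝ) 1 := by
      intro t ht
      refine ⟨?_, ht⟩
      have h1 : 0 < t ^ p := Real.rpow_pos_of_pos ht.1 _
      have h2 : 0 < (1 - t) ^ q := Real.rpow_pos_of_pos (by linarith [ht.2]) _
      have h3 : 0 < (1 - σ * t) ^ (-r) := Real.rpow_pos_of_pos (by nlinarith [ht.1, ht.2]) _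
      have h4 : 0 < Real.exp (-s * t) := Real.exp_pos _
      exact ne_of_gt (by positivity)
    calc (0:ENNReal) < volume (Ioo (0:ℝ) 1) := by simp
      _ ≤ _ := measure_mono hsub
  · filter_upwards [ae_restrict_mem measurableSet_Ioo] with t ht
    have h1 : 0 ≤ t ^ p := Real.rpow_nonneg ht.1.le _
    have h2 : 0 ≤ (1 - t) ^ q := Real.rpow_nonneg (by linarith [ht.2]) _
    have h3 : 0 ≤ (1 - σ * t) ^ (-r) := Real.rpow_nonneg (by nlinarith [ht.1, ht.2]) _
    positivity
  · exact integrable_J σ p q r s hσ0 hσ1 hp hq hr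

lemma hasDerivAt_J (σ p q r : ℝ) (hσ0 : 0 < σ) (hσ1 : σ < 1) (hp : -1 < p) (hq : -1 < q)
    (hr : 0 ≤ r) (s : ℝ) :
    HasDerivAt (fun x => Jint σ p q r x) (-Jint σ (p+1) q r s) s := by
  set μ := volume.restrict (Ioo (0:ℝ) 1) with hμ
  set F : ℝ → ℝ → ℝ :=
    fun x t => t ^ p * (1 - t) ^ q * (1 - σ * t) ^ (-r) * Real.exp (-x * t) with hF
  set F' : ℝ → ℝ → ℝ :=
    fun x t => -(t ^ (p+1) * (1 - t) ^ q * (1 - σ * t) ^ (-r) * Real.exp (-x * t)) with hF'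
  set bound : ℝ → ℝ :=
    fun t => ((1 - σ) ^ (-r) * Real.exp (|s|+1)) * (t ^ p * (1 - t) ^ q) with hbound
  have key : Integrable (F' s) μ ∧
      HasDerivAt (fun x => ∫ t, F x t ∂μ) (∫ t, F' s t ∂μ) s := by
    apply hasDerivAt_integral_of_dominated_loc_of_deriv_le (s := Metric.ball s 1) (Metric.ball_mem_nhds s one_pos)
    · exact Filter.Eventually.of_forall fun x =>
        (contOn_J σ p q r x hσ0 hσ1).aestronglyMeasurable measurableSet_Ioo
    · exact integrable_J σ p q r s hσ0 hσ1 hp hq hr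
    · exact ((contOn_J σ (p+1) q r s hσ0 hσ1).aestronglyMeasurable measurableSet_Ioo).neg
    · filter_upwards [ae_restrict_mem measurableSet_Ioo] with t ht x hx
      have ht0 := ht.1
      have ht1 := ht.2
      have hb1 : 0 < 1 - σ * t := by nlinarith
      have e1 : 0 ≤ t ^ p := Real.rpow_nonneg ht0.le _
      have e2 : 0 ≤ (1 - t) ^ q := Real.rpow_nonneg (by linarith) _
      have e4 : 0 ≤ (1 - σ * t) ^ (-r) := Real.rpow_nonneg hb1.le _
      have hxb : |x| ≤ |s| + 1 := by
        have := mem_ball_iff_norm.1 hx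
        rw [Real.norm_eq_abs] at this
        calc |x| = |s + (x - s)| := by ring_nf
          _ ≤ |s| + |x - s| := abs_add_le _ _
          _ ≤ |s| + 1 := by linarith
      have hexp : Real.exp (-x * t) ≤ Real.exp (|s| + 1) := by
        apply Real.exp_le_exp.2
        calc -x * t ≤ |(-x) * t| := le_abs_self _
          _ = |x| * |t| := by rw [abs_mul, abs_neg]
          _ ≤ (|s| + 1) * 1 := by
              apply mul_le_mul hxb _ (abs_nonneg t) (by positivity)
              rw [abs_of_pos ht0]; exact ht1.le
          _ = |s| + 1 := mul_one _
      have htp : t ^ (p+1) ≤ t ^ p := by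
        rw [Real.rpow_add_one (ne_of_gt ht0) p]
        nlinarith [Real.rpow_pos_of_pos ht0 p]
      have htp0 : 0 ≤ t ^ (p+1) := Real.rpow_nonneg ht0.le _
      have he2 : (1 - σ * t) ^ (-r) ≤ (1 - σ) ^ (-r) :=
        Real.rpow_le_rpow_of_nonpos (by linarith) (by nlinarith) (by linarith)
      rw [hF', Real.norm_eq_abs, abs_neg,
        abs_of_nonneg (mul_nonneg (mul_nonneg (mul_nonneg htp0 e2) e4) (Real.exp_pos _).le)]
      calc t ^ (p+1) * (1 - t) ^ q * (1 - σ * t) ^ (-r) * Real.exp (-x * t)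
          ≤ t ^ p * (1 - t) ^ q * ((1 - σ) ^ (-r)) * Real.exp (|s| + 1) := by
            apply mul_le_mul _ hexp (Real.exp_pos _).le
              (mul_nonneg (mul_nonneg e1 e2) (Real.rpow_nonneg (by linarith) _))
            apply mul_le_mul _ he2 e4 (mul_nonneg e1 e2)
            exact mul_le_mul_of_nonneg_right htp e2
        _ = bound t := by rw [hbound]; ring
    · exact (beta_integrable hp hq).const_mul _
    · filter_upwards [ae_restrict_mem measurableSet_Ioo] with t ht x _
      have ht0 := ht.1
      have hd : HasDerivAt (fun x : ℝ => t ^ p * (1 - t) ^ q * (1 - σ * t) ^ (-r)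
          * Real.exp (-x * t))
          ((t ^ p * (1 - t) ^ q * (1 - σ * t) ^ (-r)) * (Real.exp (-x * t) * (-1 * t))) x := by
        have hinner : HasDerivAt (fun x : ℝ => -x * t) (-1 * t) x :=
          (hasDerivAt_id x).neg.mul_const t
        exact (hinner.exp.const_mul _)
      refine hd.congr_deriv (Eq.symm ?_)
      show -(t ^ (p + 1) * (1 - t) ^ q * (1 - σ * t) ^ (-r) * Real.exp (-x * t)) = _
      rw [Real.rpow_add_one (ne_of_gt ht0) p]
      ring
  have heq : (fun x => ∫ t, F x t ∂μ) = fun x => Jint σ p q r x := rfl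
  have hval : ∫ t, F' s t ∂μ = -Jint σ (p+1) q r s := by
    rw [hF', Jint, integral_neg]
  rw [heq, hval] at key
  exact key.2

lemma ibp_J (σ p q r s : ℝ) (hσ0 : 0 < σ) (hσ1 : σ < 1) (hp : 0 < p) (hq : 0 < q)
    (hr : 0 ≤ r) :
    p * Jint σ (p-1) q r s - q * Jint σ p (q-1) r s + r * σ * Jint σ p q (r+1) s
      - s * Jint σ p q r s = 0 := by
  set u : ℝ → ℝ := fun t => t ^ p * (1 - t) ^ q * (1 - σ * t) ^ (-r) * Real.exp (-s * t) with hu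
  set u' : ℝ → ℝ := fun t =>
      p * (t ^ (p-1) * (1 - t) ^ q * (1 - σ * t) ^ (-r) * Real.exp (-s * t))
    - q * (t ^ p * (1 - t) ^ (q-1) * (1 - σ * t) ^ (-r) * Real.exp (-s * t))
    + r * σ * (t ^ p * (1 - t) ^ q * (1 - σ * t) ^ (-(r+1)) * Real.exp (-s * t))
    - s * (t ^ p * (1 - t) ^ q * (1 - σ * t) ^ (-r) * Real.exp (-s * t)) with hu'
  have hderiv : ∀ t ∈ Ioo (0:ℝ) 1, HasDerivAt u (u' t) t := by
    intro t ht
    have ht0 := ht.1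
    have ht1 := ht.2
    have hb1 : (0:ℝ) < 1 - σ * t := by nlinarith
    have hA := (hasDerivAt_id t).rpow_const (p := p) (Or.inl (ne_of_gt ht0))
    have hB := ((hasDerivAt_const t (1:ℝ)).sub (hasDerivAt_id t)).rpow_const (p := q)
        (Or.inl (by intro h; simp only [Pi.sub_apply, id_eq] at h; linarith))
    have hC := ((hasDerivAt_const t (1:ℝ)).sub ((hasDerivAt_id t).const_mul σ)).rpow_const
        (p := -r) (Or.inl (ne_of_gt hb1))
    have hD := ((hasDerivAt_id t).const_mul (-s)).exp
    have H := ((hA.mul hB).mul hC).mul hD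
    simp only [Pi.mul_apply, Pi.sub_apply, id_eq] at H
    refine H.congr_deriv (Eq.symm ?_)
    show u' t = _
    rw [hu']
    simp only []
    rw [show -(r+1) = -r-1 from by ring]
    ring
  have hcont : ContinuousOn u (Icc (0:ℝ) 1) := by
    apply continuousOn_of_forall_continuousAt
    intro x hx
    have h1 : ContinuousAt (fun t : ℝ => t ^ p) x :=
      continuousAt_id.rpow_const (Or.inr hp.le)
    have h2 : ContinuousAt (fun t : ℝ => (1 - t) ^ q) x :=
      (continuousAt_const.sub continuousAt_id).rpow_const (Or.inr hq.le)
    have h3 : ContinuousAt (fun t : ℝ => (1 - σ * t) ^ (-r)) x :=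
      (continuousAt_const.sub (continuousAt_const.mul continuousAt_id)).rpow_const
        (Or.inl (by
          intro h
          simp only [Pi.sub_apply, Pi.mul_apply, id_eq] at h
          have hx1 := hx.1
          have hx2 := hx.2
          nlinarith))
    have h4 : ContinuousAt (fun t : ℝ => Real.exp (-s * t)) x :=
      Real.continuous_exp.continuousAt.comp (continuousAt_const.mul continuousAt_id)
    exact ((h1.mul h2).mul h3).mul h4
  have hint : IntervalIntegrable u' volume 0 1 := by
    rw [intervalIntegrable_iff_integrableOn_Ioo_of_le (by norm_num : (0:ℝ) ≤ 1)]
    exact ((((integrable_J σ (p-1) q r s hσ0 hσ1 (by linarith) (by linarith) hr).const_mul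
      p).sub ((integrable_J σ p (q-1) r s hσ0 hσ1 (by linarith) (by linarith) hr).const_mul
      q)).add ((integrable_J σ p q (r+1) s hσ0 hσ1 (by linarith) (by linarith)
      (by linarith)).const_mul (r * σ))).sub
      ((integrable_J σ p q r s hσ0 hσ1 (by linarith) (by linarith) hr).const_mul s)
  have hftc : ∫ x in (0:ℝ)..1, u' x = u 1 - u 0 :=
    intervalIntegral.integral_eq_sub_of_hasDeriv_right_of_le (by norm_num) hcont
      (fun x hx => (hderiv x hx).hasDerivWithinAt) hint
  have hu1 : u 1 = 0 := by
    rw [hu]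
    simp only []
    rw [show (1:ℝ) - 1 = 0 from by ring, Real.zero_rpow (ne_of_gt hq)]
    ring
  have hu0 : u 0 = 0 := by
    rw [hu]
    simp only []
    rw [Real.zero_rpow (ne_of_gt hp)]
    ring
  rw [hu1, hu0, sub_zero, intervalIntegral.integral_of_le (by norm_num : (0:ℝ) ≤ 1),
    integral_Ioc_eq_integral_Ioo] at hftc
  rw [← hftc, hu']
  rw [integral_sub, integral_add, integral_sub]
  · simp only [integral_const_mul, Jint]
  · exact (integrable_J σ (p-1) q r s hσ0 hσ1 (by linarith) (by linarith) hr).const_mul p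
  · exact (integrable_J σ p (q-1) r s hσ0 hσ1 (by linarith) (by linarith) hr).const_mul q
  · exact ((integrable_J σ (p-1) q r s hσ0 hσ1 (by linarith) (by linarith) hr).const_mul p).sub
      ((integrable_J σ p (q-1) r s hσ0 hσ1 (by linarith) (by linarith) hr).const_mul q)
  · exact (integrable_J σ p q (r+1) s hσ0 hσ1 (by linarith) (by linarith)
      (by linarith)).const_mul (r * σ)
  · exact (((integrable_J σ (p-1) q r s hσ0 hσ1 (by linarith) (by linarith) hr).const_mul
      p).sub ((integrable_J σ p (q-1) r s hσ0 hσ1 (by linarith) (by linarith) hr).const_mul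
      q)).add ((integrable_J σ p q (r+1) s hσ0 hσ1 (by linarith) (by linarith)
      (by linarith)).const_mul (r * σ))
  · exact (integrable_J σ p q r s hσ0 hσ1 (by linarith) (by linarith) hr).const_mul s

lemma cheb (g F : ℝ → ℝ)
    (hF0 : ∀ t ∈ Ioo (0:ℝ) 1, 0 ≤ F t)
    (hmono : ∀ x ∈ Ioo (0:ℝ) 1, ∀ y ∈ Ioo (0:ℝ) 1, 0 ≤ (g x - g y) * (x - y))
    (h1 : IntegrableOn F (Ioo (0:ℝ) 1))
    (h2 : IntegrableOn (fun t => t * F t) (Ioo (0:ℝ) 1))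
    (h3 : IntegrableOn (fun t => g t * F t) (Ioo (0:ℝ) 1))
    (h4 : IntegrableOn (fun t => t * g t * F t) (Ioo (0:ℝ) 1)) :
    (∫ t in Ioo (0:ℝ) 1, g t * F t) * (∫ t in Ioo (0:ℝ) 1, t * F t) ≤
      (∫ t in Ioo (0:ℝ) 1, F t) * (∫ t in Ioo (0:ℝ) 1, t * g t * F t) := by
  set μ := volume.restrict (Ioo (0:ℝ) 1) with hμ
  have hne : 0 ≤ ∫ p : ℝ × ℝ, ((g p.1 - g p.2) * (p.1 - p.2)) * (F p.1 * F p.2) ∂(μ.prod μ) := by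
    apply integral_nonneg_of_ae
    have hmem : ∀ᵐ p ∂(μ.prod μ), p ∈ (Ioo (0:ℝ) 1) ×ˢ (Ioo (0:ℝ) 1) := by
      rw [hμ, Measure.prod_restrict]
      exact ae_restrict_mem (measurableSet_Ioo.prod measurableSet_Ioo)
    filter_upwards [hmem] with p hp
    exact mul_nonneg (hmono _ hp.1 _ hp.2) (mul_nonneg (hF0 _ hp.1) (hF0 _ hp.2))
  have hInt1 : Integrable (fun p : ℝ × ℝ => p.1 * g p.1 * F p.1 * F p.2) (μ.prod μ) :=
    h4.mul_prod h1
  have hInt2 : Integrable (fun p : ℝ × ℝ => F p.1 * (p.2 * g p.2 * F p.2)) (μ.prod μ) :=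
    h1.mul_prod h4
  have hInt3 : Integrable (fun p : ℝ × ℝ => g p.1 * F p.1 * (p.2 * F p.2)) (μ.prod μ) :=
    h3.mul_prod h2
  have hInt4 : Integrable (fun p : ℝ × ℝ => p.1 * F p.1 * (g p.2 * F p.2)) (μ.prod μ) :=
    h2.mul_prod h3
  have hSum1 : Integrable (fun p : ℝ × ℝ =>
      p.1 * g p.1 * F p.1 * F p.2 + F p.1 * (p.2 * g p.2 * F p.2)) (μ.prod μ) := hInt1.add hInt2
  have hSum2 : Integrable (fun p : ℝ × ℝ =>
      g p.1 * F p.1 * (p.2 * F p.2) + p.1 * F p.1 * (g p.2 * F p.2)) (μ.prod μ) := hInt3.add hInt4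
  have expand : (fun p : ℝ × ℝ => ((g p.1 - g p.2) * (p.1 - p.2)) * (F p.1 * F p.2))
      = fun p : ℝ × ℝ => (p.1 * g p.1 * F p.1 * F p.2 + F p.1 * (p.2 * g p.2 * F p.2))
        - (g p.1 * F p.1 * (p.2 * F p.2) + p.1 * F p.1 * (g p.2 * F p.2)) := by
    funext p
    ring
  have p1 : ∫ p : ℝ × ℝ, p.1 * g p.1 * F p.1 * F p.2 ∂(μ.prod μ)
      = (∫ t, t * g t * F t ∂μ) * (∫ t, F t ∂μ) := integral_prod_mul (fun t => t * g t * F t) F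
  have p2 : ∫ p : ℝ × ℝ, F p.1 * (p.2 * g p.2 * F p.2) ∂(μ.prod μ)
      = (∫ t, F t ∂μ) * (∫ t, t * g t * F t ∂μ) := integral_prod_mul F (fun t => t * g t * F t)
  have p3 : ∫ p : ℝ × ℝ, g p.1 * F p.1 * (p.2 * F p.2) ∂(μ.prod μ)
      = (∫ t, g t * F t ∂μ) * (∫ t, t * F t ∂μ) :=
    integral_prod_mul (fun t => g t * F t) (fun t => t * F t)
  have p4 : ∫ p : ℝ × ℝ, p.1 * F p.1 * (g p.2 * F p.2) ∂(μ.prod μ)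
      = (∫ t, t * F t ∂μ) * (∫ t, g t * F t ∂μ) :=
    integral_prod_mul (fun t => t * F t) (fun t => g t * F t)
  rw [expand, integral_sub hSum1 hSum2, integral_add hInt1 hInt2, integral_add hInt3 hInt4,
    p1, p2, p3, p4] at hne
  linarith

lemma rpow_shift {t : ℝ} (ht : t ≠ 0) {a b : ℝ} (h : b = a + 1) : t ^ b = t ^ a * t := by
  rw [h, Real.rpow_add_one ht]

set_option maxHeartbeats 2000000 in
theorem stmt19 (α β σ γ : ℝ) (hα : 0 < α) (hβ : 1 < β)
    (hσ0 : 0 < σ) (hσ1 : σ < 1) (hγ : 0 < γ)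
    (G : ℝ → ℝ)
    (hG : ∀ s : ℝ, G s = ∫ t in Set.Ioo (0 : ℝ) 1,
      t ^ (α - 1) * (1 - t) ^ (β - 1) * (1 - σ * t) ^ (-γ) * Real.exp (-s * t)) :
    (∀ s > (0 : ℝ), DifferentiableAt ℝ G s ∧ DifferentiableAt ℝ (deriv G) s) ∧
    (∀ s > (0 : ℝ), 0 < G s ∧ deriv G s < 0) ∧
    (∀ s > (0 : ℝ),
      s * (deriv G s / G s - 2 * deriv (deriv G) s / deriv G s) ≤ α + 2 + 2 * γ * σ / (1 - σ)) ∧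
    (∀ k : ℕ, α + 2 + 2 * γ * σ / (1 - σ) ≤ k → ∀ s > (0 : ℝ),
      deriv G s / G s - 2 * deriv (deriv G) s / deriv G s ≤ k / s) := by
  have hGfun : G = fun x => Jint σ (α-1) (β-1) γ x := by
    funext x
    show G x = Jint σ (α-1) (β-1) γ x
    rw [hG x, Jint]
  have hd1 : ∀ x : ℝ, HasDerivAt G (-Jint σ α (β-1) γ x) x := by
    intro x
    have h := hasDerivAt_J σ (α-1) (β-1) γ hσ0 hσ1 (by linarith) (by linarith) hγ.le x
    rw [show α - 1 + 1 = α from by ring] at h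
    rw [hGfun]
    exact h
  have hderivG : deriv G = fun x => -Jint σ α (β-1) γ x := funext fun x => (hd1 x).deriv
  have hd2 : ∀ x : ℝ, HasDerivAt (deriv G) (Jint σ (α+1) (β-1) γ x) x := by
    intro x
    rw [hderivG]
    have h := (hasDerivAt_J σ α (β-1) γ hσ0 hσ1 (by linarith) (by linarith) hγ.le x).neg
    rw [neg_neg] at h
    exact h
  have hderiv2 : deriv (deriv G) = fun x => Jint σ (α+1) (β-1) γ x :=
    funext fun x => (hd2 x).deriv
  have main3 : ∀ s > (0 : ℝ),
      s * (deriv G s / G s - 2 * deriv (deriv G) s / deriv G s)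
        ≤ α + 2 + 2 * γ * σ / (1 - σ) := by
    intro s hs
    simp only [hderiv2]
    simp only [hderivG]
    simp only [hGfun]
    have hP0 : 0 < Jint σ (α-1) (β-1) γ s :=
      pos_J σ (α-1) (β-1) γ s hσ0 hσ1 (by linarith) (by linarith) hγ.le
    have hP1 : 0 < Jint σ α (β-1) γ s :=
      pos_J σ α (β-1) γ s hσ0 hσ1 (by linarith) (by linarith) hγ.le
    have hP2 : 0 < Jint σ (α+1) (β-1) γ s :=
      pos_J σ (α+1) (β-1) γ s hσ0 hσ1 (by linarith) (by linarith) hγ.le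
    have hQ1 : 0 < Jint σ α (β-2) γ s :=
      pos_J σ α (β-2) γ s hσ0 hσ1 (by linarith) (by linarith) hγ.le
    have hQ2 : 0 < Jint σ (α+1) (β-2) γ s :=
      pos_J σ (α+1) (β-2) γ s hσ0 hσ1 (by linarith) (by linarith) hγ.le
    have hR1 : 0 < Jint σ α (β-1) (γ+1) s :=
      pos_J σ α (β-1) (γ+1) s hσ0 hσ1 (by linarith) (by linarith) (by linarith)
    have hR2 : 0 < Jint σ (α+1) (β-1) (γ+1) s :=
      pos_J σ (α+1) (β-1) (γ+1) s hσ0 hσ1 (by linarith) (by linarith) (by linarith)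
    have e1 : α * Jint σ (α-1) (β-1) γ s - (β-1) * Jint σ α (β-2) γ s
        + γ * σ * Jint σ α (β-1) (γ+1) s - s * Jint σ α (β-1) γ s = 0 := by
      have h := ibp_J σ α (β-1) γ s hσ0 hσ1 hα (by linarith) hγ.le
      rw [show β - 1 - 1 = β - 2 from by ring] at h
      exact h
    have e2 : (α+1) * Jint σ α (β-1) γ s - (β-1) * Jint σ (α+1) (β-2) γ s
        + γ * σ * Jint σ (α+1) (β-1) (γ+1) s - s * Jint σ (α+1) (β-1) γ s = 0 := by
      have h := ibp_J σ (α+1) (β-1) γ s hσ0 hσ1 (by linarith) (by linarith) hγ.le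
      rw [show α + 1 - 1 = α from by ring, show β - 1 - 1 = β - 2 from by ring] at h
      exact h
    -- Chebyshev inequality
    set F : ℝ → ℝ := fun t => t ^ (α-1) * (1 - t) ^ (β-1) * (1 - σ * t) ^ (-γ)
      * Real.exp (-s * t) with hFdef
    set g : ℝ → ℝ := fun t => t / (1 - t) with hgdef
    have E2 : ∀ t ∈ Ioo (0:ℝ) 1,
        t ^ α * (1 - t) ^ (β-1) * (1 - σ * t) ^ (-γ) * Real.exp (-s * t) = t * F t := by
      intro t ht
      rw [hFdef]
      simp only []
      rw [rpow_shift (ne_of_gt ht.1) (show α = (α-1) + 1 from by ring)]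
      ring
    have E3 : ∀ t ∈ Ioo (0:ℝ) 1,
        t ^ α * (1 - t) ^ (β-2) * (1 - σ * t) ^ (-γ) * Real.exp (-s * t) = g t * F t := by
      intro t ht
      have h1t : (1:ℝ) - t ≠ 0 := by intro h; have := ht.2; linarith
      rw [hFdef, hgdef]
      simp only []
      rw [rpow_shift (ne_of_gt ht.1) (show α = (α-1) + 1 from by ring),
        rpow_shift h1t (show β - 1 = (β-2) + 1 from by ring)]
      field_simp [h1t]
    have E4 : ∀ t ∈ Ioo (0:ℝ) 1,
        t ^ (α+1) * (1 - t) ^ (β-2) * (1 - σ * t) ^ (-γ) * Real.exp (-s * t)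
          = t * g t * F t := by
      intro t ht
      have h1t : (1:ℝ) - t ≠ 0 := by intro h; have := ht.2; linarith
      rw [hFdef, hgdef]
      simp only []
      rw [rpow_shift (ne_of_gt ht.1) (show α + 1 = α + 1 from rfl),
        rpow_shift (ne_of_gt ht.1) (show α = (α-1) + 1 from by ring),
        rpow_shift h1t (show β - 1 = (β-2) + 1 from by ring)]
      field_simp [h1t]
    have hF0 : ∀ t ∈ Ioo (0:ℝ) 1, 0 ≤ F t := by
      intro t ht
      rw [hFdef]
      simp only []
      have k1 : 0 ≤ t ^ (α-1) := Real.rpow_nonneg ht.1.le _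
      have k2 : 0 ≤ (1 - t) ^ (β-1) := Real.rpow_nonneg (by linarith [ht.2]) _
      have k3 : 0 ≤ (1 - σ * t) ^ (-γ) := Real.rpow_nonneg (by nlinarith [ht.1, ht.2]) _
      positivity
    have hmono : ∀ x ∈ Ioo (0:ℝ) 1, ∀ y ∈ Ioo (0:ℝ) 1, 0 ≤ (g x - g y) * (x - y) := by
      intro x hx y hy
      have hx1 : (0:ℝ) < 1 - x := by linarith [hx.2]
      have hy1 : (0:ℝ) < 1 - y := by linarith [hy.2]
      rw [hgdef]
      simp only []
      rw [show x / (1-x) - y / (1-y) = (x - y) / ((1-x)*(1-y)) from by field_simp; ring,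
        div_mul_eq_mul_div]
      exact div_nonneg (mul_self_nonneg _) (by positivity)
    have h1 : IntegrableOn F (Ioo (0:ℝ) 1) :=
      integrable_J σ (α-1) (β-1) γ s hσ0 hσ1 (by linarith) (by linarith) hγ.le
    have h2 : IntegrableOn (fun t => t * F t) (Ioo (0:ℝ) 1) :=
      (integrable_J σ α (β-1) γ s hσ0 hσ1 (by linarith) (by linarith) hγ.le).congr_fun
        E2 measurableSet_Ioo
    have h3 : IntegrableOn (fun t => g t * F t) (Ioo (0:ℝ) 1) :=
      (integrable_J σ α (β-2) γ s hσ0 hσ1 (by linarith) (by linarith) hγ.le).congr_fun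
        E3 measurableSet_Ioo
    have h4 : IntegrableOn (fun t => t * g t * F t) (Ioo (0:ℝ) 1) :=
      (integrable_J σ (α+1) (β-2) γ s hσ0 hσ1 (by linarith) (by linarith) hγ.le).congr_fun
        E4 measurableSet_Ioo
    have hch := cheb g F hF0 hmono h1 h2 h3 h4
    have c1 : ∫ t in Ioo (0:ℝ) 1, F t = Jint σ (α-1) (β-1) γ s := by rw [hFdef, Jint]
    have c2 : ∫ t in Ioo (0:ℝ) 1, t * F t = Jint σ α (β-1) γ s :=
      (setIntegral_congr_fun measurableSet_Ioo E2).symm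
    have c3 : ∫ t in Ioo (0:ℝ) 1, g t * F t = Jint σ α (β-2) γ s :=
      (setIntegral_congr_fun measurableSet_Ioo E3).symm
    have c4 : ∫ t in Ioo (0:ℝ) 1, t * g t * F t = Jint σ (α+1) (β-2) γ s :=
      (setIntegral_congr_fun measurableSet_Ioo E4).symm
    rw [c1, c2, c3, c4] at hch
    -- bound R2
    have i6 : (1-σ) * Jint σ (α+1) (β-1) (γ+1) s ≤ Jint σ α (β-1) γ s := by
      rw [Jint, Jint, ← integral_const_mul]
      apply setIntegral_mono_on
      · exact (integrable_J σ (α+1) (β-1) (γ+1) s hσ0 hσ1 (by linarith) (by linarith)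
          (by linarith)).const_mul _
      · exact integrable_J σ α (β-1) γ s hσ0 hσ1 (by linarith) (by linarith) hγ.le
      · exact measurableSet_Ioo
      · intro t ht
        have ht0 := ht.1
        have ht1 := ht.2
        have hb1 : (0:ℝ) < 1 - σ * t := by nlinarith
        have k1 : 0 ≤ t ^ α := Real.rpow_nonneg ht0.le _
        have k2 : 0 ≤ (1 - t) ^ (β-1) := Real.rpow_nonneg (by linarith) _
        have k3 : 0 ≤ (1 - σ * t) ^ (-(γ+1)) := Real.rpow_nonneg hb1.le _
        have k4 : (0:ℝ) < Real.exp (-s * t) := Real.exp_pos _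
        have h5 : (1-σ) * t ≤ 1 - σ * t := by nlinarith
        rw [rpow_shift (ne_of_gt ht0) (show α + 1 = α + 1 from rfl),
          rpow_shift (ne_of_gt hb1) (show -γ = -(γ+1) + 1 from by ring)]
        calc (1-σ) * (t ^ α * t * (1 - t) ^ (β-1) * (1 - σ * t) ^ (-(γ+1)) * Real.exp (-s * t))
            = (t ^ α * (1 - t) ^ (β-1) * (1 - σ * t) ^ (-(γ+1)) * Real.exp (-s * t))
              * ((1-σ) * t) := by ring
          _ ≤ (t ^ α * (1 - t) ^ (β-1) * (1 - σ * t) ^ (-(γ+1)) * Real.exp (-s * t))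
              * (1 - σ * t) := by
                apply mul_le_mul_of_nonneg_left h5
                positivity
          _ = t ^ α * (1 - t) ^ (β-1) * ((1 - σ * t) ^ (-(γ+1)) * (1 - σ * t))
              * Real.exp (-s * t) := by ring
    -- final algebra
    have hσd : (0:ℝ) < 1 - σ := by linarith
    set P0 := Jint σ (α-1) (β-1) γ s with hP0d
    set P1 := Jint σ α (β-1) γ s with hP1d
    set P2 := Jint σ (α+1) (β-1) γ s with hP2d
    set Q1 := Jint σ α (β-2) γ s with hQ1d
    set Q2 := Jint σ (α+1) (β-2) γ s with hQ2d
    set R1 := Jint σ α (β-1) (γ+1) s with hR1d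
    set R2 := Jint σ (α+1) (β-1) (γ+1) s with hR2d
    clear_value P0 P1 P2 Q1 Q2 R1 R2
    clear hG hGfun hderivG hderiv2 hd1 hd2 E2 E3 E4 hF0 hmono h1 h2 h3 h4 c1 c2 c3 c4
    rw [show s * (-P1 / P0
        - 2 * P2 / -P1)
        = (2 * (s * P2) * P0
          - (s * P1) * P1)
          / (P0 * P1) from by
      field_simp [ne_of_gt hP0, ne_of_gt hP1]
      ring]
    rw [div_le_iff₀ (mul_pos hP0 hP1)]
    have es1 : s * P1 = α * P0
        - (β-1) * Q1 + γ * σ * R1 := by linarith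
    have es2 : s * P2 = (α+1) * P1
        - (β-1) * Q2 + γ * σ * R2 := by linarith
    rw [es1, es2]
    have hbQ : (β-1) * (Q1 * P1)
        ≤ (β-1) * (P0 * Q2) :=
      mul_le_mul_of_nonneg_left hch (by linarith)
    have hR2b : 2 * γ * σ * R2 * P0
        ≤ 2 * γ * σ / (1-σ) * (P0 * P1) := by
      rw [div_mul_eq_mul_div, le_div_iff₀ hσd]
      nlinarith [mul_le_mul_of_nonneg_left i6
        (show (0:ℝ) ≤ 2 * γ * σ * P0 from by positivity)]
    nlinarith [mul_pos hQ2 hP0, mul_pos hR1 hP1,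
      mul_pos (mul_pos hγ hσ0) (mul_pos hR1 hP1),
      mul_pos (show (0:ℝ) < β - 1 from by linarith) (mul_pos hQ2 hP0)]
  refine ⟨fun s _ => ⟨(hd1 s).differentiableAt, (hd2 s).differentiableAt⟩,
    fun s hs => ⟨?_, ?_⟩, main3, ?_⟩
  · rw [hGfun]
    exact pos_J σ (α-1) (β-1) γ s hσ0 hσ1 (by linarith) (by linarith) hγ.le
  · rw [hderivG]
    simp only []
    have := pos_J σ α (β-1) γ s hσ0 hσ1 (by linarith) (by linarith) hγ.le
    linarith
  · intro k hk s hs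
    rw [le_div_iff₀ hs]
    have h := main3 s hs
    nlinarith
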